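/- There exists a positive semidefinite 16×16 complex matrix B such that W[1,1,0,1] = B^Γ + 2·P₁ + 2·P₂, where B^Γ is the partial transpose of B with respect to the second tensor factor, and P₁, P₂ are the rank-one projectors onto the vectors Ψ₁ = (e₀⊗e₀ − e₂⊗e₂)/√2 and Ψ₂ = (e₁⊗e₁ − e₃⊗e₃)/√2. In particular, the witness W_II(0) = W[1,1,0,1] is decomposable. -/

import Mathlib

open Matrix Complex Real

/-- The tensor (product) vector `x ⊗ y` in `ℂ¹⁶`. -/
noncomputable def tensorVec (x y : Fin 4 → ℂ) : Fin 4 × Fin 4 → ℂ :=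
  fun p => x p.1 * y p.2

/-- The expectation `⟨v, W v⟩ = ∑ i, conj (v i) * (W *ᵥ v) i`. -/
noncomputable def expec (W : Matrix (Fin 4 × Fin 4) (Fin 4 × Fin 4) ℂ)
    (v : Fin 4 × Fin 4 → ℂ) : ℂ :=
  ∑ i, star (v i) * W.mulVec v i

/-- The Bell-diagonal matrix `W[a,b,c,d]` with `(α₀,α₁,α₂,α₃) = (a,b,c,d)`:
`W((k,m),(k',m')) = α_{(m−k) mod 4}` if `k=k', m=m'`; `−1` if `k=m, k'=m', k≠k'`;
`0` otherwise. -/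
noncomputable def Wabcd (a b c d : ℝ) : Matrix (Fin 4 × Fin 4) (Fin 4 × Fin 4) ℂ :=
  fun p q =>
    if p.1 = q.1 ∧ p.2 = q.2 then ((![a, b, c, d] (p.2 - p.1) : ℝ) : ℂ)
    else if p.1 = p.2 ∧ q.1 = q.2 ∧ p.1 ≠ q.1 then -1
    else 0

/-- The class-I witness `W_I(θ)`. -/
noncomputable def WI (θ : ℝ) : Matrix (Fin 4 × Fin 4) (Fin 4 × Fin 4) ℂ :=
  Wabcd ((2 - Real.sin θ) / 2) ((1 + Real.cos θ) / 2)
        (2 - (2 - Real.sin θ) / 2) (1 - (1 + Real.cos θ) / 2)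

/-- The class-II witness `W_II(θ)`. -/
noncomputable def WII (θ : ℝ) : Matrix (Fin 4 × Fin 4) (Fin 4 × Fin 4) ℂ :=
  Wabcd ((1 + Real.cos θ) / 2) ((2 - Real.sin θ) / 2)
        (1 - (1 + Real.cos θ) / 2) (2 - (2 - Real.sin θ) / 2)

/-- The maximally entangled vector `Ψ(j,j') = (−1)^{j+1}/2` if `j = j'`, else `0`. -/
noncomputable def PsiVec : Fin 4 × Fin 4 → ℂ :=
  fun p => if p.1 = p.2 then ((-1 : ℂ) ^ ((p.1 : ℕ) + 1)) / 2 else 0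

/-- The rank-one projector `P = |Ψ⟩⟨Ψ|`. -/
noncomputable def Pmat : Matrix (Fin 4 × Fin 4) (Fin 4 × Fin 4) ℂ :=
  fun u v => PsiVec u * star (PsiVec v)

open scoped ComplexOrder

/-- Partial transpose with respect to the second tensor factor:
`X^Γ((i,j),(k,l)) = X((i,l),(k,j))`. -/
noncomputable def partialTransposeSnd (X : Matrix (Fin 4 × Fin 4) (Fin 4 × Fin 4) ℂ) :
    Matrix (Fin 4 × Fin 4) (Fin 4 × Fin 4) ℂ :=
  fun p q => X (p.1, q.2) (q.1, p.2)

/-- `Ψ₁ = (|0⊗0⟩ − |2⊗2⟩)/√2`. -/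
noncomputable def Psi1 : Fin 4 × Fin 4 → ℂ :=
  fun p => if p = ((0 : Fin 4), (0 : Fin 4)) then (1 : ℂ) / Real.sqrt 2
    else if p = ((2 : Fin 4), (2 : Fin 4)) then -(1 : ℂ) / Real.sqrt 2 else 0

/-- `Ψ₂ = (|1⊗1⟩ − |3⊗3⟩)/√2`. -/
noncomputable def Psi2 : Fin 4 × Fin 4 → ℂ :=
  fun p => if p = ((1 : Fin 4), (1 : Fin 4)) then (1 : ℂ) / Real.sqrt 2
    else if p = ((3 : Fin 4), (3 : Fin 4)) then -(1 : ℂ) / Real.sqrt 2 else 0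

/-- `P₁ = |Ψ₁⟩⟨Ψ₁|`. -/
noncomputable def P1 : Matrix (Fin 4 × Fin 4) (Fin 4 × Fin 4) ℂ :=
  fun u v => Psi1 u * star (Psi1 v)

/-- `P₂ = |Ψ₂⟩⟨Ψ₂|`. -/
noncomputable def P2 : Matrix (Fin 4 × Fin 4) (Fin 4 × Fin 4) ℂ :=
  fun u v => Psi2 u * star (Psi2 v)

def Bz' : Matrix (Fin 4 × Fin 4) (Fin 4 × Fin 4) ℤ :=
  fun p q =>
    if p.1 = q.1 ∧ p.2 = q.2 ∧ (p.2 = p.1 + 1 ∨ p.1 = p.2 + 1) then 1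
    else if q.2 = p.1 ∧ p.2 = q.1 ∧ (q.1 = p.1 + 1 ∨ p.1 = q.1 + 1) then -1
    else 0

noncomputable def Bc' : Matrix (Fin 4 × Fin 4) (Fin 4 × Fin 4) ℂ :=
  Bz'.map (Int.cast)

lemma Bz'_sq : Bz' * Bz' = Bz' + Bz' := by decide
lemma Bz'_symm : ∀ p q, Bz' p q = Bz' q p := by
  have h : Bz'ᵀ = Bz' := by decide
  intro p q
  exact (congrFun (congrFun h q) p)

lemma Bc'_herm : Bc'ᴴ = Bc' := by
  ext p q
  simp [Bc', conjTranspose_apply, map_apply, Bz'_symm p q]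

lemma Bc'_sq : Bc' * Bc' = (2 : ℂ) • Bc' := by
  have h := congrArg (fun M => M.map (Int.cast : ℤ → ℂ)) Bz'_sq
  have hm : (Bz' * Bz').map (Int.cast : ℤ → ℂ) = Bc' * Bc' :=
    Matrix.map_mul (f := Int.castRingHom ℂ)
  have h2 : Bc' * Bc' = Bc' + Bc' := by
    rw [← hm, Bz'_sq, Matrix.map_add _ Int.cast_add]; rfl
  rw [h2, two_smul]

lemma Bc'_psd : Bc'.PosSemidef := by
  set c : ℂ := (((Real.sqrt 2 : ℝ) : ℂ))⁻¹ with hc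
  have hs : ((Real.sqrt 2 : ℝ) : ℂ) * ((Real.sqrt 2 : ℝ) : ℂ) = 2 := by
    rw [← Complex.ofReal_mul, Real.mul_self_sqrt (by norm_num)]
    norm_num
  have key : Bc' = (c • Bc')ᴴ * (c • Bc') := by
    rw [conjTranspose_smul, Bc'_herm, Matrix.smul_mul, Matrix.mul_smul, Bc'_sq]
    have hcr : star c = c := by
      simp [hc, ← Complex.ofReal_inv]
    rw [hcr, smul_smul, smul_smul]
    have h1 : c * c * 2 = 1 := by
      rw [hc, ← mul_inv, hs]
      norm_num
    rw [h1, one_smul]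
  rw [key]
  exact posSemidef_conjTranspose_mul_self _

set_option maxHeartbeats 2000000 in
theorem W1101_decomposable :
    ∃ B : Matrix (Fin 4 × Fin 4) (Fin 4 × Fin 4) ℂ,
      B.PosSemidef ∧
        Wabcd 1 1 0 1 = partialTransposeSnd B + (2 : ℂ) • P1 + (2 : ℂ) • P2 := by
  refine ⟨Bc', Bc'_psd, ?_⟩
  have h2 : ((Real.sqrt 2:ℝ):ℂ) * ((Real.sqrt 2:ℝ):ℂ) = 2 := by
    rw [← Complex.ofReal_mul, Real.mul_self_sqrt (by norm_num)]; norm_num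
  ext p q
  fin_cases p <;> fin_cases q <;>
    · simp (config := { decide := true }) [Wabcd, partialTransposeSnd, Bc', Bz', P1, P2, Psi1,
        Psi2, Matrix.add_apply, Matrix.smul_apply, Prod.ext_iff,
        show (-1:Fin 4) = 3 from rfl, show (-2:Fin 4) = 2 from rfl, show (-3:Fin 4) = 1 from rfl]
      try field_simp
      try linear_combination h2
      try linear_combination (-1 : ℂ) * h2
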